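/- The number of configurations of nested concentric loop heights: the maximum of the volume function V(C) = Σ_{x,y} φ_C(x,y) over configurations of disjoint simple closed loops on an L×L lattice (with 0 ≤ φ ≤ number of loops enclosing each dual site, loops disjoint and contained in the lattice) is attained by the configuration of ⌊L/2⌋ concentric square loops, and this maximum is Σ_{k=1}^{⌊L/2⌋} (L − 2k)², which is Θ(L³). -/

import Mathlib

open Finset

/-- Two sites of the `L × L` grid are adjacent (distance one). -/
def GridAdj {L : ℕ} (p q : Fin L × Fin L) : Prop :=
  ((p.1 : ℕ) = (q.1 : ℕ) ∧ ((p.2 : ℤ) - (q.2 : ℤ)).natAbs = 1) ∨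
  ((p.2 : ℕ) = (q.2 : ℕ) ∧ ((p.1 : ℤ) - (q.1 : ℤ)).natAbs = 1)

/-- `φ` is a valid height field for a configuration of disjoint nested loops on
the `L × L` lattice: it changes by at most one between adjacent dual sites and
vanishes on the boundary. -/
def IsHeightField {L : ℕ} (φ : Fin L × Fin L → ℕ) : Prop :=
  (∀ p q, GridAdj p q → φ p ≤ φ q + 1) ∧
  (∀ p : Fin L × Fin L,
    (p.1 : ℕ) = 0 ∨ (p.1 : ℕ) = L - 1 ∨ (p.2 : ℕ) = 0 ∨ (p.2 : ℕ) = L - 1 → φ p = 0)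

def dwall (L : ℕ) (p : Fin L × Fin L) : ℕ :=
  min (min (p.1 : ℕ) (L - 1 - (p.1 : ℕ))) (min (p.2 : ℕ) (L - 1 - (p.2 : ℕ)))

lemma le_dwall {L : ℕ} {φ : Fin L × Fin L → ℕ} (h : IsHeightField φ) (p : Fin L × Fin L) :
    φ p ≤ dwall L p := by
  suffices H : ∀ n (p : Fin L × Fin L), dwall L p ≤ n → φ p ≤ n by
    exact H _ p le_rfl
  intro n
  induction n with
  | zero =>
    intro p hp
    have hp1 := p.1.isLt
    have := h.2 p (by unfold dwall at hp; omega)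
    omega
  | succ n ih =>
    intro p hp
    by_cases h0 : dwall L p ≤ n
    · exact (ih p h0).trans (Nat.le_succ n)
    have hd : dwall L p = n + 1 := by omega
    have hp1 := p.1.isLt; have hp2 := p.2.isLt
    have hc : ((p.1 : ℕ) = n + 1) ∨ (L - 1 - (p.1 : ℕ) = n + 1 ∧ (p.1 : ℕ) + 1 < L)
        ∨ ((p.2 : ℕ) = n + 1) ∨ (L - 1 - (p.2 : ℕ) = n + 1 ∧ (p.2 : ℕ) + 1 < L) := by
      unfold dwall at hd; omega
    rcases hc with hc | ⟨hc, hc'⟩ | hc | ⟨hc, hc'⟩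
    · refine (h.1 p (⟨(p.1 : ℕ) - 1, by omega⟩, p.2) (Or.inr ⟨rfl, by
        show (((p.1 : ℕ) : ℤ) - (((p.1 : ℕ) - 1 : ℕ) : ℤ)).natAbs = 1
        omega⟩)).trans ?_
      have hdq := ih (⟨(p.1 : ℕ) - 1, by omega⟩, p.2) (by
        show min (min ((p.1 : ℕ) - 1) (L - 1 - ((p.1 : ℕ) - 1))) _ ≤ n
        unfold dwall at hd; omega)
      omega
    · refine (h.1 p (⟨(p.1 : ℕ) + 1, hc'⟩, p.2) (Or.inr ⟨rfl, by
        show (((p.1 : ℕ) : ℤ) - (((p.1 : ℕ) + 1 : ℕ) : ℤ)).natAbs = 1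
        omega⟩)).trans ?_
      have hdq := ih (⟨(p.1 : ℕ) + 1, hc'⟩, p.2) (by
        show min (min ((p.1 : ℕ) + 1) (L - 1 - ((p.1 : ℕ) + 1))) _ ≤ n
        unfold dwall at hd; omega)
      omega
    · refine (h.1 p (p.1, ⟨(p.2 : ℕ) - 1, by omega⟩) (Or.inl ⟨rfl, by
        show (((p.2 : ℕ) : ℤ) - (((p.2 : ℕ) - 1 : ℕ) : ℤ)).natAbs = 1
        omega⟩)).trans ?_
      have hdq := ih (p.1, ⟨(p.2 : ℕ) - 1, by omega⟩) (by
        show min _ (min ((p.2 : ℕ) - 1) (L - 1 - ((p.2 : ℕ) - 1))) ≤ n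
        unfold dwall at hd; omega)
      omega
    · refine (h.1 p (p.1, ⟨(p.2 : ℕ) + 1, hc'⟩) (Or.inl ⟨rfl, by
        show (((p.2 : ℕ) : ℤ) - (((p.2 : ℕ) + 1 : ℕ) : ℤ)).natAbs = 1
        omega⟩)).trans ?_
      have hdq := ih (p.1, ⟨(p.2 : ℕ) + 1, hc'⟩) (by
        show min _ (min ((p.2 : ℕ) + 1) (L - 1 - ((p.2 : ℕ) + 1))) ≤ n
        unfold dwall at hd; omega)
      omega

lemma card_strip (L k : ℕ) (hk1 : 1 ≤ k) (hk2 : 2 * k ≤ L) :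
    ((univ : Finset (Fin L)).filter fun i : Fin L => k ≤ min (i : ℕ) (L - 1 - (i : ℕ))).card
      = L - 2 * k := by
  have h1 : ((univ : Finset (Fin L)).filter fun i : Fin L => k ≤ min (i : ℕ) (L - 1 - (i : ℕ))).card
      = ((Finset.range L).filter fun n => k ≤ min n (L - 1 - n)).card := by
    refine Finset.card_bij (fun (i : Fin L) _ => (i : ℕ)) ?_ ?_ ?_
    · intro i hi
      simp only [mem_filter, mem_univ, true_and] at hi
      simp only [mem_filter, mem_range]
      exact ⟨i.isLt, hi⟩
    · intro i _ j _ hij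
      exact Fin.val_injective hij
    · intro n hn
      simp only [mem_filter, mem_range] at hn
      exact ⟨⟨n, hn.1⟩, by simp only [mem_filter, mem_univ, true_and]; exact hn.2, rfl⟩
  rw [h1]
  have h2 : ((Finset.range L).filter fun n => k ≤ min n (L - 1 - n)) = Finset.Icc k (L - 1 - k) := by
    ext n
    simp only [mem_filter, mem_range, mem_Icc]
    omega
  rw [h2, Nat.card_Icc]
  omega

lemma sum_dwall (L : ℕ) :
    ∑ p : Fin L × Fin L, dwall L p = ∑ k ∈ Finset.Icc 1 (L / 2), (L - 2 * k) ^ 2 := by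
  have step1 : ∀ p : Fin L × Fin L,
      dwall L p = ∑ k ∈ Finset.Icc 1 (L / 2), (if k ≤ dwall L p then 1 else 0) := by
    intro p
    rw [Finset.sum_boole]
    have hle : dwall L p ≤ L / 2 := by have := p.1.isLt; unfold dwall; omega
    have : ((Finset.Icc 1 (L / 2)).filter fun k => k ≤ dwall L p)
        = Finset.Icc 1 (dwall L p) := by
      ext k; simp only [mem_filter, mem_Icc]; omega
    rw [this, Nat.card_Icc, Nat.cast_id]
    omega
  rw [Finset.sum_congr rfl (fun p _ => step1 p), Finset.sum_comm]
  refine Finset.sum_congr rfl (fun k hk => ?_)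
  simp only [mem_Icc] at hk
  rw [Finset.sum_boole, Nat.cast_id]
  have hsplit : ((univ : Finset (Fin L × Fin L)).filter fun p => k ≤ dwall L p)
      = ((univ : Finset (Fin L)).filter fun i : Fin L => k ≤ min (i : ℕ) (L - 1 - (i : ℕ))) ×ˢ
        ((univ : Finset (Fin L)).filter fun i : Fin L => k ≤ min (i : ℕ) (L - 1 - (i : ℕ))) := by
    ext ⟨i, j⟩
    simp only [mem_filter, mem_univ, mem_product, true_and, dwall, le_min_iff]
  rw [hsplit, Finset.card_product, card_strip L k hk.1 (by omega), pow_two]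

lemma vol_le_cube (L : ℕ) : ∑ k ∈ Finset.Icc 1 (L / 2), (L - 2 * k) ^ 2 ≤ L ^ 3 := by
  calc ∑ k ∈ Finset.Icc 1 (L / 2), (L - 2 * k) ^ 2
      ≤ ∑ k ∈ Finset.Icc 1 (L / 2), L ^ 2 :=
        Finset.sum_le_sum fun k _ => Nat.pow_le_pow_left (by omega) 2
    _ = (L / 2) * L ^ 2 := by rw [Finset.sum_const, Nat.card_Icc, smul_eq_mul, Nat.add_sub_cancel]
    _ ≤ L * L ^ 2 := Nat.mul_le_mul_right _ (Nat.div_le_self L 2)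
    _ = L ^ 3 := by ring

lemma cube_le_vol (L : ℕ) (hL : 8 ≤ L) :
    L ^ 3 ≤ 54 * ∑ k ∈ Finset.Icc 1 (L / 2), (L - 2 * k) ^ 2 := by
  have h1 : (L / 4) * (L / 2) ^ 2 ≤ ∑ k ∈ Finset.Icc 1 (L / 2), (L - 2 * k) ^ 2 := by
    calc (L / 4) * (L / 2) ^ 2
        = ∑ k ∈ Finset.Icc 1 (L / 4), (L / 2) ^ 2 := by
          rw [Finset.sum_const, Nat.card_Icc, smul_eq_mul, Nat.add_sub_cancel]
      _ ≤ ∑ k ∈ Finset.Icc 1 (L / 4), (L - 2 * k) ^ 2 :=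
          Finset.sum_le_sum fun k hk => by
            simp only [mem_Icc] at hk
            exact Nat.pow_le_pow_left (by omega) 2
      _ ≤ ∑ k ∈ Finset.Icc 1 (L / 2), (L - 2 * k) ^ 2 :=
          Finset.sum_le_sum_of_subset (Finset.Icc_subset_Icc_right (by omega))
  have h2 : L ≤ 6 * (L / 4) := by omega
  have h3 : L ≤ 3 * (L / 2) := by omega
  calc L ^ 3 = L * (L * L) := by ring
    _ ≤ (6 * (L / 4)) * ((3 * (L / 2)) * (3 * (L / 2))) :=
        Nat.mul_le_mul h2 (Nat.mul_le_mul h3 h3)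
    _ = 54 * ((L / 4) * (L / 2) ^ 2) := by ring
    _ ≤ 54 * ∑ k ∈ Finset.Icc 1 (L / 2), (L - 2 * k) ^ 2 := Nat.mul_le_mul_left _ h1

lemma theta_part :
    (fun L : ℕ => ((∑ k ∈ Finset.Icc 1 (L / 2), (L - 2 * k) ^ 2 : ℕ) : ℝ))
      =Θ[Filter.atTop] (fun L : ℕ => (L : ℝ) ^ 3) := by
  constructor
  · rw [Asymptotics.isBigO_iff]
    refine ⟨1, Filter.Eventually.of_forall fun L => ?_⟩
    have := vol_le_cube L
    rw [Real.norm_eq_abs, Real.norm_eq_abs, abs_of_nonneg (by positivity),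
      abs_of_nonneg (by positivity), one_mul]
    exact_mod_cast this
  · rw [Asymptotics.isBigO_iff]
    refine ⟨54, Filter.eventually_atTop.mpr ⟨8, fun L hL => ?_⟩⟩
    have := cube_le_vol L hL
    rw [Real.norm_eq_abs, Real.norm_eq_abs, abs_of_nonneg (by positivity),
      abs_of_nonneg (by positivity)]
    exact_mod_cast this

lemma dwall_le_half {L : ℕ} (p : Fin L × Fin L) : dwall L p ≤ L / 2 := by
  have := p.1.isLt; unfold dwall; omega

lemma dwall_isHeightField (L : ℕ) : IsHeightField (dwall L) := by
  constructor
  · rintro p q (⟨h1, h2⟩ | ⟨h1, h2⟩) <;>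
    · have hp1 := p.1.isLt; have hq1 := q.1.isLt
      have hp2 := p.2.isLt; have hq2 := q.2.isLt
      unfold dwall; omega
  · intro p hp
    have hp1 := p.1.isLt
    unfold dwall; omega


/-- The maximum of the volume `V(C) = Σ φ_C` over loop configurations on the
`L × L` lattice is attained by `⌊L/2⌋` concentric square loops (the "single
mountain"), equals `Σ_{k=1}^{⌊L/2⌋} (L − 2k)²`, and this quantity is `Θ(L³)`. -/
theorem single_mountain_maximizes_volume :
    (∀ L : ℕ, IsGreatest
      {V : ℕ | ∃ φ : Fin L × Fin L → ℕ, IsHeightField φ ∧ V = ∑ p, φ p}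
      (∑ k ∈ Finset.Icc 1 (L / 2), (L - 2 * k) ^ 2)) ∧
    (fun L : ℕ => ((∑ k ∈ Finset.Icc 1 (L / 2), (L - 2 * k) ^ 2 : ℕ) : ℝ))
      =Θ[Filter.atTop] (fun L : ℕ => (L : ℝ) ^ 3) := by
  refine ⟨fun L => ⟨⟨dwall L, dwall_isHeightField L, (sum_dwall L).symm⟩, ?_⟩, theta_part⟩
  rintro V ⟨φ, hφ, rfl⟩
  calc ∑ p, φ p ≤ ∑ p, dwall L p := Finset.sum_le_sum fun p _ => le_dwall hφ p
    _ = _ := sum_dwall L
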